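/- Let 0 < ϰ < π/2 and let Q_ϰ = {z ∈ ℂ : z ≠ 0 and |arg z − π/2| ≥ ϰ and |arg z + π/2| ≥ ϰ}. Define P(z) = z/(e^z − 1). Then there exist constants C₁, C₂ > 0 such that |P(z)| ≤ C₁|z| + C₂ for all z ∈ Q_ϰ with e^z ≠ 1. -/

import Mathlib

open Complex Real

theorem P_bound_on_sector (ϰ : ℝ) (hϰ0 : 0 < ϰ) (hϰ : ϰ < π / 2) :
    ∃ C₁ > (0:ℝ), ∃ C₂ > (0:ℝ), ∀ z : ℂ, z ≠ 0 →
      ϰ ≤ |Complex.arg z - π / 2| → ϰ ≤ |Complex.arg z + π / 2| →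
      Complex.exp z ≠ 1 →
      ‖z / (Complex.exp z - 1)‖ ≤ C₁ * ‖z‖ + C₂ := by
  have hπ : (0:ℝ) < π := Real.pi_pos
  have hϰπ : ϰ < π := lt_trans hϰ (by linarith)
  have hs : 0 < Real.sin ϰ := Real.sin_pos_of_pos_of_lt_pi hϰ0 hϰπ
  set s := Real.sin ϰ with hs_def
  refine ⟨1, one_pos, 1 / s, by positivity, ?_⟩
  intro z hz h1 h2 hez
  set r := ‖z‖ with hr_def
  have hr : 0 < r := norm_pos_iff.mpr hz
  have hcos : z.re = r * Real.cos (Complex.arg z) := by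
    rw [Complex.cos_arg hz]; field_simp; rfl
  set θ := Complex.arg z with hθ_def
  have hθ1 : -π < θ := Complex.neg_pi_lt_arg z
  have hθ2 : θ ≤ π := Complex.arg_le_pi z
  -- Step 1: either Re z ≥ s r or Re z ≤ - s r
  have hkey : z.re ≥ s * r ∨ z.re ≤ -(s * r) := by
    rcases le_abs.mp h1 with hA | hA
    · -- θ ≥ π/2 + ϰ
      right
      have hcc : Real.cos θ ≤ Real.cos (π/2 + ϰ) :=
        Real.cos_le_cos_of_nonneg_of_le_pi (by linarith) hθ2 (by linarith)
      rw [show π/2 + ϰ = ϰ + π/2 by ring, Real.cos_add_pi_div_two] at hcc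
      rw [hcos]; nlinarith
    · rcases le_abs.mp h2 with hB | hB
      · -- -π/2 + ϰ ≤ θ ≤ π/2 - ϰ
        left
        have habs : |θ| ≤ π/2 - ϰ := abs_le.mpr ⟨by linarith, by linarith⟩
        have hcc : Real.cos (π/2 - ϰ) ≤ Real.cos |θ| :=
          Real.cos_le_cos_of_nonneg_of_le_pi (abs_nonneg θ) (by linarith) habs
        rw [Real.cos_pi_div_two_sub, Real.cos_abs] at hcc
        rw [hcos]; nlinarith
      · -- θ ≤ -(π/2 + ϰ)
        right
        have hcc : Real.cos (-θ) ≤ Real.cos (π/2 + ϰ) :=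
          Real.cos_le_cos_of_nonneg_of_le_pi (by linarith) (by linarith) (by linarith)
        rw [show π/2 + ϰ = ϰ + π/2 by ring, Real.cos_add_pi_div_two, Real.cos_neg] at hcc
        rw [hcos]; nlinarith
  -- Step 2
  have habs_div : ‖z / (Complex.exp z - 1)‖
      = r / ‖Complex.exp z - 1‖ := by
    rw [norm_div]
  rcases hkey with hre | hre
  · -- right half: |e^z - 1| ≥ e^{Re z} - 1 ≥ s r
    have hE : s * r ≤ ‖Complex.exp z - 1‖ := by
      have h1' : s * r + 1 ≤ Real.exp (s * r) := Real.add_one_le_exp (s * r)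
      have h2' : Real.exp (s * r) ≤ Real.exp z.re := Real.exp_le_exp.mpr hre
      have h3' : Real.exp z.re - 1 ≤ ‖Complex.exp z - 1‖ := by
        have h := norm_sub_norm_le (Complex.exp z) (1 : ℂ)
        simpa [Complex.norm_exp] using h
      linarith
    have hEpos : 0 < ‖Complex.exp z - 1‖ :=
      lt_of_lt_of_le (mul_pos hs hr) hE
    rw [habs_div]
    have : r / ‖Complex.exp z - 1‖ ≤ r / (s * r) :=
      div_le_div_of_nonneg_left hr.le (by positivity) hE
    have heq : r / (s * r) = 1 / s := by field_simp
    rw [heq] at this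
    nlinarith
  · -- left half: |e^z - 1| ≥ 1 - e^{Re z} ≥ s r / (1 + s r)
    have ht : 0 < s * r := by positivity
    have hE : s * r / (1 + s * r) ≤ ‖Complex.exp z - 1‖ := by
      have h1' : s * r + 1 ≤ Real.exp (s * r) := Real.add_one_le_exp (s * r)
      have h2' : Real.exp z.re ≤ Real.exp (-(s * r)) := Real.exp_le_exp.mpr hre
      have h3' : Real.exp (-(s * r)) = (Real.exp (s * r))⁻¹ := Real.exp_neg _
      have h4' : (Real.exp (s * r))⁻¹ ≤ (1 + s * r)⁻¹ := by
        apply inv_anti₀ (by linarith) (by linarith)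
      have h5' : (1:ℝ) - Real.exp z.re ≤ ‖Complex.exp z - 1‖ := by
        have h := norm_sub_norm_le (1 : ℂ) (Complex.exp z)
        rw [norm_sub_rev] at h
        simpa [Complex.norm_exp] using h
      have h6' : Real.exp z.re ≤ (1 + s * r)⁻¹ := by
        calc Real.exp z.re ≤ Real.exp (-(s * r)) := h2'
          _ = (Real.exp (s * r))⁻¹ := h3'
          _ ≤ (1 + s * r)⁻¹ := h4'
      have h7' : s * r / (1 + s * r) ≤ 1 - (1 + s * r)⁻¹ := by
        rw [div_eq_mul_inv]
        have : (1 + s * r) * (1 + s * r)⁻¹ = 1 := by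
          field_simp
        nlinarith
      linarith
    have hEpos : 0 < ‖Complex.exp z - 1‖ := by
      have : (0:ℝ) < s * r / (1 + s * r) := by positivity
      linarith
    rw [habs_div]
    have hle : r / ‖Complex.exp z - 1‖ ≤ r / (s * r / (1 + s * r)) :=
      div_le_div_of_nonneg_left hr.le (by positivity) hE
    have heq : r / (s * r / (1 + s * r)) = 1 * r + 1 / s := by
      field_simp; ring
    rw [heq] at hle
    exact hle
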